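/- Let Γ be a Z-grading of K[x_1,...,x_n] in which each variable x_i is homogeneous of a strictly positive degree. Then every Γ-graded automorphism of K[x_1,...,x_n] is graded-tame, i.e., a composition of Γ-graded elementary and Γ-graded linear automorphisms. -/

import Mathlib

open MvPolynomial

/-- An automorphism of `K[x_1,…,x_n]` is *elementary* if it sends some variable `x_i` to
`x_i + F`, where `F` is a polynomial in the remaining variables, and fixes the other variables. -/
def IsElementary {K : Type*} [CommRing K] {n : ℕ}
    (φ : MvPolynomial (Fin n) K ≃ₐ[K] MvPolynomial (Fin n) K) : Prop :=
  ∃ (i : Fin n) (F : MvPolynomial (Fin n) K), i ∉ F.vars ∧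
    φ (X i) = X i + F ∧ ∀ j : Fin n, j ≠ i → φ (X j) = X j

/-- An automorphism of `K[x_1,…,x_n]` is *linear* if it sends each variable to a
`K`-linear combination of the variables. -/
def IsLinearAut {K : Type*} [CommRing K] {n : ℕ}
    (φ : MvPolynomial (Fin n) K ≃ₐ[K] MvPolynomial (Fin n) K) : Prop :=
  ∀ i : Fin n, ∃ c : Fin n → K, φ (X i) = ∑ j : Fin n, C (c j) * X j

/-- For the `ℤ`-grading of `K[x_1,…,x_n]` with `deg x_i = w i`, an automorphism is
*graded* if it maps each homogeneous component into itself. -/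
def IsGraded {K : Type*} [CommRing K] {n : ℕ} (w : Fin n → ℤ)
    (φ : MvPolynomial (Fin n) K ≃ₐ[K] MvPolynomial (Fin n) K) : Prop :=
  ∀ (d : ℤ) (f : MvPolynomial (Fin n) K),
    f.IsWeightedHomogeneous w d → (φ f).IsWeightedHomogeneous w d

/-- A graded automorphism is *graded-tame* if it is a composition of graded elementary
and graded linear automorphisms. -/
def IsGradedTame {K : Type*} [CommRing K] {n : ℕ} (w : Fin n → ℤ)
    (φ : MvPolynomial (Fin n) K ≃ₐ[K] MvPolynomial (Fin n) K) : Prop :=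
  ∃ l : List (MvPolynomial (Fin n) K ≃ₐ[K] MvPolynomial (Fin n) K),
    (∀ ψ ∈ l, IsGraded w ψ ∧ (IsElementary ψ ∨ IsLinearAut ψ)) ∧ φ = l.prod

namespace GTAux

variable {K : Type*} [Field K] {n : ℕ}

local notation "P" => MvPolynomial (Fin n) K



/-- weight of a single exponent -/
lemma weight_single (w : Fin n → ℤ) (i : Fin n) :
    Finsupp.weight w (Finsupp.single i 1) = w i := by
  simp [Finsupp.weight_apply, Finsupp.sum_single_index]

lemma lc_X (i k : Fin n) :
    coeff (Finsupp.single k 1) (X i : P) = if i = k then 1 else 0 := by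
  classical
  rw [coeff_X']
  simp [Finsupp.single_left_inj (one_ne_zero)]

/-- substitution of homogeneous elements preserves homogeneity -/
lemma isWH_aeval {w : Fin n → ℤ} {g : Fin n → P}
    (hg : ∀ j, IsWeightedHomogeneous w (g j) (w j))
    {p : P} {d : ℤ} (hp : p.IsWeightedHomogeneous w d) :
    IsWeightedHomogeneous w (aeval g p) d := by
  classical
  rw [p.as_sum, map_sum]
  apply IsWeightedHomogeneous.sum
  intro σ hσ
  rw [aeval_monomial]
  have hpow : ∀ j : Fin n, ∀ m : ℕ, IsWeightedHomogeneous w (g j ^ m) (m • w j) := by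
    intro j m
    induction m with
    | zero => simpa using isWeightedHomogeneous_one K w
    | succ m ih =>
        rw [pow_succ, succ_nsmul]
        exact ih.mul (hg j)
  have hprod : IsWeightedHomogeneous w (σ.prod fun j m => g j ^ m)
      (∑ j ∈ σ.support, σ j • w j) := by
    rw [Finsupp.prod]
    exact IsWeightedHomogeneous.prod σ.support _ _ (fun j _ => hpow j (σ j))
  have hdeg : (∑ j ∈ σ.support, σ j • w j) = d := by
    have := hp (mem_support_iff.mp hσ)
    rw [← this, Finsupp.weight_apply, Finsupp.sum]
  have := (isWeightedHomogeneous_C w (coeff σ p) (R := K)).mul hprod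
  rw [zero_add, hdeg] at this
  simpa [algebraMap_eq] using this

/-- an AlgHom with homogeneous values on variables preserves homogeneity -/
lemma isWH_algHom {w : Fin n → ℤ} (α : P →ₐ[K] P)
    (hα : ∀ j, IsWeightedHomogeneous w (α (X j)) (w j))
    {p : P} {d : ℤ} (hp : p.IsWeightedHomogeneous w d) :
    IsWeightedHomogeneous w (α p) d := by
  have h := MvPolynomial.aeval_unique α
  rw [h]
  exact isWH_aeval (g := ⇑α ∘ X) hα hp

lemma cc_of_wh {w : Fin n → ℤ} {p : P} {d : ℤ} (hd : d ≠ 0)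
    (hp : IsWeightedHomogeneous w p d) : constantCoeff p = 0 := by
  rw [constantCoeff_eq]
  by_contra h
  exact hd (by simpa using (hp h).symm)



/-- constant-term-free polynomials are preserved by constant-term-free substitutions -/
lemma cc_apply (α : P →ₐ[K] P) (hα : ∀ j, constantCoeff (α (X j)) = 0)
    {p : P} (hp : constantCoeff p = 0) : constantCoeff (α p) = 0 := by
  classical
  rw [p.as_sum, map_sum, map_sum]
  apply Finset.sum_eq_zero
  intro σ hσ
  have hσ0 : σ ≠ 0 := by
    rintro rfl
    rw [constantCoeff_eq] at hp
    exact mem_support_iff.mp hσ hp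
  obtain ⟨j, hj⟩ := Finsupp.support_nonempty_iff.mpr hσ0
  rw [monomial_eq, map_mul, map_mul]
  apply mul_eq_zero_of_right
  rw [Finsupp.prod, map_prod, map_prod]
  apply Finset.prod_eq_zero hj
  rw [map_pow, map_pow]
  rw [hα j]
  exact zero_pow (by simpa using Finsupp.mem_support_iff.mp hj)

lemma add_eq_single_cases {a b : Fin n →₀ ℕ} {k : Fin n}
    (h : a + b = Finsupp.single k 1) : a = 0 ∨ b = 0 := by
  classical
  have hk : a k + b k = 1 := by
    rw [← Finsupp.add_apply, h, Finsupp.single_eq_same]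
  have hj : ∀ j, j ≠ k → a j = 0 ∧ b j = 0 := by
    intro j hjk
    have : a j + b j = 0 := by
      rw [← Finsupp.add_apply, h, Finsupp.single_eq_of_ne' (Ne.symm hjk)]
    omega
  have : a k = 0 ∨ b k = 0 := by omega
  rcases this with h0 | h0
  · left
    ext j
    by_cases hjk : j = k
    · subst hjk; exact h0
    · exact (hj j hjk).1
  · right
    ext j
    by_cases hjk : j = k
    · subst hjk; exact h0
    · exact (hj j hjk).2

lemma lc_mul_zero {p q : P} (hp : constantCoeff p = 0) (hq : constantCoeff q = 0)
    (k : Fin n) : coeff (Finsupp.single k 1) (p * q) = 0 := by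
  classical
  rw [coeff_mul]
  apply Finset.sum_eq_zero
  rintro ⟨a, b⟩ hab
  have hab' : a + b = Finsupp.single k 1 := Finset.HasAntidiagonal.mem_antidiagonal.mp hab
  rcases add_eq_single_cases hab' with rfl | rfl
  · rw [constantCoeff_eq] at hp; simp [hp]
  · rw [constantCoeff_eq] at hq; simp [hq]




lemma lc_monomial_apply (α : P →ₐ[K] P) (hα : ∀ j, constantCoeff (α (X j)) = 0)
    (σ : Fin n →₀ ℕ) (c : K) (k : Fin n) :
    coeff (Finsupp.single k 1) (α (monomial σ c))
      = ∑ j : Fin n, coeff (Finsupp.single j 1) (monomial σ c)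
          * coeff (Finsupp.single k 1) (α (X j)) := by
  classical
  by_cases hσ0 : σ = 0
  · subst hσ0
    have h1 : (monomial (0 : Fin n →₀ ℕ) c : P) = C c := by rw [C_apply]
    rw [h1]
    have h2 : α (C c) = C c := by
      simpa [algebraMap_eq] using α.commutes c
    rw [h2]
    have h3 : ∀ j : Fin n, coeff (Finsupp.single j 1) (C c : P) = 0 := by
      intro j
      rw [coeff_C, if_neg]
      exact fun h => (one_ne_zero : (1:ℕ) ≠ 0) (Finsupp.single_eq_zero.mp h.symm)
    simp [h3]
  · by_cases hσ1 : ∃ j, σ = Finsupp.single j 1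
    · obtain ⟨j0, rfl⟩ := hσ1
      have h1 : (monomial (Finsupp.single j0 1) c : P) = C c * X j0 := by
        rw [show (X j0 : P) = monomial (Finsupp.single j0 1) 1 from rfl, C_mul_monomial, mul_one]
      rw [h1, map_mul]
      have h2 : α (C c) = C c := by simpa [algebraMap_eq] using α.commutes c
      rw [h2, coeff_C_mul]
      have h3 : ∀ j : Fin n, coeff (Finsupp.single j 1) (C c * X j0 : P)
          = if j0 = j then c else 0 := by
        intro j
        rw [coeff_C_mul, coeff_X']
        by_cases h : j0 = j
        · subst h; simp
        · rw [if_neg, if_neg h, mul_zero]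
          exact fun hh => h (Finsupp.single_left_inj (one_ne_zero : (1:ℕ) ≠ 0) |>.mp hh)
      simp [h3, ite_mul]
    · push_neg at hσ1
      -- LHS is zero
      obtain ⟨j0, hj0⟩ := Finsupp.support_nonempty_iff.mpr hσ0
      have hle : Finsupp.single j0 1 ≤ σ :=
        Finsupp.single_le_iff.mpr (Nat.one_le_iff_ne_zero.mpr (Finsupp.mem_support_iff.mp hj0))
      have hsum : Finsupp.single j0 1 + (σ - Finsupp.single j0 1) = σ :=
        add_tsub_cancel_of_le hle
      have hτ : σ - Finsupp.single j0 1 ≠ 0 := by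
        intro h
        apply hσ1 j0
        rw [← hsum, h, add_zero]
      have hmon : (monomial σ c : P)
          = monomial (Finsupp.single j0 1) 1 * monomial (σ - Finsupp.single j0 1) c := by
        rw [monomial_mul, one_mul, hsum]
      have hXj : (monomial (Finsupp.single j0 1) (1 : K) : P) = X j0 := rfl
      have hccτ : constantCoeff (α (monomial (σ - Finsupp.single j0 1) c)) = 0 := by
        apply cc_apply α hα
        rw [constantCoeff_eq, coeff_monomial, if_neg (fun h => hτ h)]
      have hlhs : coeff (Finsupp.single k 1) (α (monomial σ c)) = 0 := by
        rw [hmon, map_mul]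
        exact lc_mul_zero (by rw [hXj]; exact hα j0) hccτ k
      rw [hlhs]
      symm
      apply Finset.sum_eq_zero
      intro j _
      rw [coeff_monomial, if_neg (fun h => hσ1 j h), zero_mul]

/-- the chain rule for linear coefficients -/
lemma lc_comp (α : P →ₐ[K] P) (hα : ∀ j, constantCoeff (α (X j)) = 0)
    (p : P) (k : Fin n) :
    coeff (Finsupp.single k 1) (α p)
      = ∑ j : Fin n, coeff (Finsupp.single j 1) p
          * coeff (Finsupp.single k 1) (α (X j)) := by
  classical
  conv_lhs => rw [p.as_sum, map_sum]
  rw [coeff_sum]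
  have : ∀ σ ∈ p.support, coeff (Finsupp.single k 1) (α (monomial σ (coeff σ p)))
      = ∑ j : Fin n, coeff (Finsupp.single j 1) (monomial σ (coeff σ p))
          * coeff (Finsupp.single k 1) (α (X j)) := fun σ _ => lc_monomial_apply α hα σ _ k
  rw [Finset.sum_congr rfl this, Finset.sum_comm]
  apply Finset.sum_congr rfl
  intro j _
  rw [← Finset.sum_mul]
  congr 1
  rw [← coeff_sum, ← p.as_sum]



lemma weight_lower_bound {w : Fin n → ℤ} (hw : ∀ i, 0 < w i) {σ : Fin n →₀ ℕ}
    {j : Fin n} (hj : j ∈ σ.support) (hσ : ∀ k, σ ≠ Finsupp.single k 1) :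
    w j < Finsupp.weight w σ := by
  classical
  have hsum : Finsupp.weight w σ = ∑ i ∈ σ.support, (σ i : ℤ) * w i := by
    rw [Finsupp.weight_apply, Finsupp.sum]
    apply Finset.sum_congr rfl
    intro i _
    rw [nsmul_eq_mul]
  have hterm : ∀ i ∈ σ.support.erase j, (0:ℤ) ≤ (σ i : ℤ) * w i := by
    intro i _
    exact mul_nonneg (Int.natCast_nonneg _) (le_of_lt (hw i))
  have hsplit : Finsupp.weight w σ
      = (σ j : ℤ) * w j + ∑ i ∈ σ.support.erase j, (σ i : ℤ) * w i := by
    rw [hsum, ← Finset.add_sum_erase _ _ hj]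
  have hσj : 1 ≤ σ j := Nat.one_le_iff_ne_zero.mpr (Finsupp.mem_support_iff.mp hj)
  by_cases h2 : 2 ≤ σ j
  · have : (2:ℤ) * w j ≤ (σ j : ℤ) * w j := by
      apply mul_le_mul_of_nonneg_right _ (le_of_lt (hw j))
      exact_mod_cast h2
    have hrest : (0:ℤ) ≤ ∑ i ∈ σ.support.erase j, (σ i : ℤ) * w i :=
      Finset.sum_nonneg hterm
    have := hw j
    rw [hsplit]; linarith
  · have hσj1 : σ j = 1 := by omega
    -- σ.support ≠ {j}
    have hne : σ.support.erase j ≠ ∅ := by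
      intro hemp
      apply hσ j
      ext i
      by_cases hij : i = j
      · subst hij; simp [hσj1]
      · have : i ∉ σ.support := by
          intro hi
          have : i ∈ σ.support.erase j := Finset.mem_erase.mpr ⟨hij, hi⟩
          simp [hemp] at this
        rw [Finsupp.notMem_support_iff.mp this, Finsupp.single_eq_of_ne' (Ne.symm hij)]
    obtain ⟨k, hk⟩ := Finset.nonempty_iff_ne_empty.mpr hne
    have hk1 : (1:ℤ) ≤ (σ k : ℤ) * w k := by
      have h1 : 1 ≤ σ k := Nat.one_le_iff_ne_zero.mpr
        (Finsupp.mem_support_iff.mp (Finset.mem_of_mem_erase hk))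
      have h2 : 1 ≤ w k := hw k
      nlinarith [Int.natCast_nonneg (σ k), (by exact_mod_cast h1 : (1:ℤ) ≤ (σ k : ℤ))]
    have hrest : (1:ℤ) ≤ ∑ i ∈ σ.support.erase j, (σ i : ℤ) * w i := by
      calc (1:ℤ) ≤ (σ k : ℤ) * w k := hk1
        _ ≤ _ := Finset.single_le_sum hterm hk
    rw [hsplit, hσj1]
    push_cast
    linarith

lemma vars_weight_lt {w : Fin n → ℤ} (hw : ∀ i, 0 < w i) {p : P} {d : ℤ}
    (hp : IsWeightedHomogeneous w p d)
    (hlc : ∀ k, coeff (Finsupp.single k 1) p = 0)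
    {j : Fin n} (hj : j ∈ p.vars) : w j < d := by
  obtain ⟨σ, hσ, hjσ⟩ := (p.mem_vars j).mp hj
  have hc : coeff σ p ≠ 0 := mem_support_iff.mp hσ
  have hdeg : Finsupp.weight w σ = d := hp hc
  have hns : ∀ k, σ ≠ Finsupp.single k 1 := by
    intro k h
    exact hc (h ▸ hlc k)
  rw [← hdeg]
  exact weight_lower_bound hw hjσ hns



lemma aeval_fix {g : Fin n → P} {p : P} (h : ∀ j ∈ p.vars, g j = X j) :
    aeval g p = p := by
  conv_rhs => rw [← aeval_X_left_apply p]
  show (aeval g : P →ₐ[K] P) p = (aeval X : P →ₐ[K] P) p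
  rw [aeval_def, aeval_def, ← coe_eval₂Hom, ← coe_eval₂Hom]
  exact eval₂Hom_congr' rfl (fun i h1 _ => h i h1) rfl

noncomputable def elemHom (i : Fin n) (F : P) : P →ₐ[K] P :=
  aeval (fun j => if j = i then X i + F else X j)

lemma elemHom_X_self (i : Fin n) (F : P) : elemHom i F (X i) = X i + F := by
  simp [elemHom]

lemma elemHom_X_ne (i : Fin n) (F : P) {j : Fin n} (hj : j ≠ i) :
    elemHom i F (X j) = X j := by
  simp [elemHom, hj]

lemma elemHom_fix (i : Fin n) (F : P) {p : P} (hp : i ∉ p.vars) :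
    elemHom i F p = p := by
  apply aeval_fix
  intro j hj
  rw [if_neg]
  exact fun h => hp (h ▸ hj)

noncomputable def elemAut (i : Fin n) (F : P) (hF : i ∉ F.vars) : P ≃ₐ[K] P :=
  AlgEquiv.ofAlgHom (elemHom i F) (elemHom i (-F))
    (by
      apply MvPolynomial.algHom_ext
      intro j
      by_cases hj : j = i
      · rw [hj]
        simp only [AlgHom.coe_comp, Function.comp_apply, AlgHom.coe_id, id_eq]
        rw [elemHom_X_self, map_add, elemHom_X_self, map_neg,
          elemHom_fix i F hF]
        ring
      · simp only [AlgHom.coe_comp, Function.comp_apply, AlgHom.coe_id, id_eq]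
        rw [elemHom_X_ne _ _ hj, elemHom_X_ne _ _ hj])
    (by
      apply MvPolynomial.algHom_ext
      intro j
      by_cases hj : j = i
      · rw [hj]
        simp only [AlgHom.coe_comp, Function.comp_apply, AlgHom.coe_id, id_eq]
        rw [elemHom_X_self, map_add, elemHom_X_self,
          elemHom_fix i (-F) hF]
        ring
      · simp only [AlgHom.coe_comp, Function.comp_apply, AlgHom.coe_id, id_eq]
        rw [elemHom_X_ne _ _ hj, elemHom_X_ne _ _ hj])

lemma elemAut_apply (i : Fin n) (F : P) (hF : i ∉ F.vars) (p : P) :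
    elemAut i F hF p = elemHom i F p := rfl

lemma elemAut_symm_apply (i : Fin n) (F : P) (hF : i ∉ F.vars) (p : P) :
    (elemAut i F hF).symm p = elemHom i (-F) p := by
  rw [elemAut, AlgEquiv.ofAlgHom_symm]
  rfl

-- linear homs from matrices
noncomputable def linHom (M : Matrix (Fin n) (Fin n) K) : P →ₐ[K] P :=
  aeval (fun i => ∑ j, C (M i j) * X j)

lemma linHom_X (M : Matrix (Fin n) (Fin n) K) (i : Fin n) :
    linHom M (X i) = ∑ j, C (M i j) * X j := by
  simp [linHom]

lemma linHom_comp_X (M N : Matrix (Fin n) (Fin n) K) (i : Fin n) :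
    linHom N (linHom M (X i)) = ∑ k, C ((M * N) i k) * X k := by
  rw [linHom_X, map_sum]
  have h1 : ∀ j, linHom N (C (M i j) * X j) = ∑ k, C (M i j * N j k) * X k := by
    intro j
    rw [map_mul, linHom_X]
    have : (linHom N : P →ₐ[K] P) (C (M i j)) = C (M i j) := by
      simpa [algebraMap_eq] using (linHom N : P →ₐ[K] P).commutes (M i j)
    rw [this, Finset.mul_sum]
    apply Finset.sum_congr rfl
    intro k _
    rw [← mul_assoc, ← C_mul]
  rw [Finset.sum_congr rfl (fun j _ => h1 j), Finset.sum_comm]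
  apply Finset.sum_congr rfl
  intro k _
  rw [← Finset.sum_mul, Matrix.mul_apply, ← map_sum C]

lemma linHom_one_X (M : Matrix (Fin n) (Fin n) K) (hM : M = 1) (i : Fin n) :
    (∑ k, C (M i k) * X k : P) = X i := by
  subst hM
  classical
  rw [Finset.sum_eq_single i]
  · simp [Matrix.one_apply]
  · intro k _ hk
    simp [Matrix.one_apply, Ne.symm hk]
  · simp

noncomputable def linAut (M N : Matrix (Fin n) (Fin n) K) (h1 : M * N = 1) (h2 : N * M = 1) :
    P ≃ₐ[K] P :=
  AlgEquiv.ofAlgHom (linHom M) (linHom N)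
    (by
      apply MvPolynomial.algHom_ext
      intro i
      simp only [AlgHom.coe_comp, Function.comp_apply, AlgHom.coe_id, id_eq]
      rw [linHom_comp_X, linHom_one_X _ h2])
    (by
      apply MvPolynomial.algHom_ext
      intro i
      simp only [AlgHom.coe_comp, Function.comp_apply, AlgHom.coe_id, id_eq]
      rw [linHom_comp_X, linHom_one_X _ h1])

lemma linAut_apply (M N : Matrix (Fin n) (Fin n) K) (h1 h2) (p : P) :
    linAut M N h1 h2 p = linHom M p := rfl

lemma linAut_symm_apply (M N : Matrix (Fin n) (Fin n) K) (h1 h2) (p : P) :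
    (linAut M N h1 h2).symm p = linHom N p := by
  rw [linAut, AlgEquiv.ofAlgHom_symm]
  rfl

lemma lc_linHom_X (M : Matrix (Fin n) (Fin n) K) (j k : Fin n) :
    coeff (Finsupp.single k 1) (linHom M (X j) : P) = M j k := by
  classical
  rw [linHom_X, coeff_sum]
  rw [Finset.sum_eq_single k]
  · rw [coeff_C_mul, coeff_X]; simp
  · intro m _ hm
    rw [coeff_C_mul, coeff_X', if_neg, mul_zero]
    exact fun h => hm (Finsupp.single_left_inj (one_ne_zero : (1:ℕ) ≠ 0) |>.mp h)
  · simp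

lemma cc_linHom_X (M : Matrix (Fin n) (Fin n) K) (j : Fin n) :
    constantCoeff (linHom M (X j) : P) = 0 := by
  rw [linHom_X, map_sum]
  apply Finset.sum_eq_zero
  intro k _
  simp

-- inverse of a block matrix is block
lemma inv_block {w : Fin n → ℤ} (M N : Matrix (Fin n) (Fin n) K)
    (h1 : M * N = 1) (h2 : N * M = 1)
    (hM : ∀ i j, w i ≠ w j → M i j = 0) :
    ∀ i j, w i ≠ w j → N i j = 0 := by
  classical
  intro i j hij
  set E : Matrix (Fin n) (Fin n) K := Matrix.diagonal (fun k => if w k = w i then 1 else 0) with hE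
  have hEM : E * M = M * E := by
    ext a b
    rw [Matrix.diagonal_mul, Matrix.mul_diagonal]
    by_cases hab : M a b = 0
    · rw [hab, mul_zero, zero_mul]
    · have : w a = w b := by_contra fun h => hab (hM a b h)
      rw [this, mul_comm]
  have hEN : N * E = E * N := by
    calc N * E = N * E * (M * N) := by rw [h1, mul_one]
      _ = N * (E * M) * N := by simp only [Matrix.mul_assoc]
      _ = N * (M * E) * N := by rw [hEM]
      _ = (N * M) * (E * N) := by simp only [Matrix.mul_assoc]
      _ = E * N := by rw [h2, one_mul]
  have h3 : (E * N) i j = N i j := by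
    rw [Matrix.diagonal_mul, if_pos rfl, one_mul]
  have h4 : (N * E) i j = 0 := by
    rw [Matrix.mul_diagonal, if_neg (fun h => hij h.symm), mul_zero]
  rw [← h3, ← hEN, h4]


lemma linHom_X_wh {w : Fin n → ℤ} (M : Matrix (Fin n) (Fin n) K)
    (hM : ∀ i j, w i ≠ w j → M i j = 0) (j : Fin n) :
    IsWeightedHomogeneous w (linHom M (X j) : P) (w j) := by
  rw [linHom_X]
  apply IsWeightedHomogeneous.sum
  intro k _
  by_cases h : M j k = 0
  · rw [h]
    simpa using isWeightedHomogeneous_zero K w (w j)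
  · have hwk : w k = w j := by
      by_contra hne
      exact h (hM j k (fun hh => hne hh.symm))
    have := (isWeightedHomogeneous_C w (M j k) (R := K)).mul (isWeightedHomogeneous_X K w k)
    rwa [zero_add, hwk] at this

lemma isGraded_of_X {w : Fin n → ℤ} (α : P ≃ₐ[K] P)
    (h : ∀ j, IsWeightedHomogeneous w (α (X j)) (w j)) : IsGraded w α :=
  fun _ f hf => isWH_algHom α.toAlgHom (fun j => by simpa using h j) hf

lemma aut_eq_one_of_fix (ψ : P ≃ₐ[K] P) (h : ∀ i, ψ (X i) = X i) : ψ = 1 := by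
  have h2 : ψ.toAlgHom = AlgHom.id K _ := MvPolynomial.algHom_ext (fun i => by simpa using h i)
  refine AlgEquiv.ext fun p => ?_
  have := congrArg (fun (f : P →ₐ[K] P) => f p) h2
  simpa using this

open scoped Classical in
lemma elem_decomp {w : Fin n → ℤ} (hw : ∀ i, 0 < w i) :
    ∀ (m : ℕ) (ψ : P ≃ₐ[K] P),
      IsGraded w ψ →
      (∀ i k, coeff (Finsupp.single k 1) (ψ (X i)) = if i = k then 1 else 0) →
      (Finset.univ.filter fun i => ψ (X i) ≠ X i).card ≤ m →
      ∃ l : List (P ≃ₐ[K] P), (∀ e ∈ l, IsGraded w e ∧ IsElementary e) ∧ ψ = l.prod := by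
  classical
  intro m
  induction m with
  | zero =>
      intro ψ _ _ hcard
      refine ⟨[], by simp, ?_⟩
      rw [List.prod_nil]
      apply aut_eq_one_of_fix
      intro i
      by_contra h
      have hi : i ∈ Finset.univ.filter fun i => ψ (X i) ≠ X i := by simp [h]
      have := Finset.card_pos.mpr ⟨i, hi⟩
      omega
  | succ m ih =>
      intro ψ hgr hlc hcard
      by_cases hB : (Finset.univ.filter fun i => ψ (X i) ≠ X i) = ∅
      · refine ⟨[], by simp, ?_⟩
        rw [List.prod_nil]
        apply aut_eq_one_of_fix
        intro i
        by_contra h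
        have hi : i ∈ Finset.univ.filter fun i => ψ (X i) ≠ X i := by simp [h]
        rw [hB] at hi
        exact absurd hi (Finset.notMem_empty i)
      · obtain ⟨i, hiB, hmin⟩ :=
          Finset.exists_min_image _ w (Finset.nonempty_iff_ne_empty.mpr hB)
        set Q : P := ψ (X i) - X i with hQdef
        have hψX : ∀ j, IsWeightedHomogeneous w (ψ (X j)) (w j) :=
          fun j => hgr (w j) (X j) (isWeightedHomogeneous_X K w j)
        have hQw : IsWeightedHomogeneous w Q (w i) :=
          (weightedHomogeneousSubmodule K w (w i)).sub_mem (hψX i)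
            (isWeightedHomogeneous_X K w i)
        have hQlc : ∀ k, coeff (Finsupp.single k 1) Q = 0 := by
          intro k
          rw [hQdef, coeff_sub, hlc i k, lc_X]
          ring
        have hQvars : ∀ j ∈ Q.vars, w j < w i := fun j hj => vars_weight_lt hw hQw hQlc hj
        have hiQ : i ∉ Q.vars := fun h => lt_irrefl _ (hQvars i h)
        have hQcc : constantCoeff Q = 0 := cc_of_wh (ne_of_gt (hw i)) hQw
        have hψXi : ψ (X i) = X i + Q := by rw [hQdef]; ring
        set e : P ≃ₐ[K] P := elemAut i Q hiQ with he
        have heX : ∀ j, e (X j) = if j = i then X i + Q else X j := by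
          intro j
          rw [he, elemAut_apply]
          by_cases hj : j = i
          · rw [if_pos hj, hj, elemHom_X_self]
          · rw [if_neg hj, elemHom_X_ne _ _ hj]
        have hegr : IsGraded w e := by
          apply isGraded_of_X
          intro j
          rw [heX j]
          by_cases hj : j = i
          · rw [if_pos hj, hj]
            exact (weightedHomogeneousSubmodule K w (w i)).add_mem
              (isWeightedHomogeneous_X K w i) hQw
          · rw [if_neg hj]
            exact isWeightedHomogeneous_X K w j
        have hesgr : IsGraded w e.symm := by
          apply isGraded_of_X
          intro j
          rw [he, elemAut_symm_apply]
          by_cases hj : j = i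
          · rw [hj, elemHom_X_self]
            exact (weightedHomogeneousSubmodule K w (w i)).add_mem
              (isWeightedHomogeneous_X K w i)
              ((weightedHomogeneousSubmodule K w (w i)).neg_mem hQw)
          · rw [elemHom_X_ne _ _ hj]
            exact isWeightedHomogeneous_X K w j
        set ψ' : P ≃ₐ[K] P := ψ.trans e.symm with hψ'
        have hψ'app : ∀ p : P, ψ' p = elemHom i (-Q) (ψ p) := by
          intro p
          rw [hψ', AlgEquiv.trans_apply, he, elemAut_symm_apply]
        have hψ'gr : IsGraded w ψ' := by
          intro d f hf
          rw [hψ', AlgEquiv.trans_apply]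
          exact hesgr d _ (hgr d f hf)
        have hccE : ∀ m, constantCoeff (elemHom i (-Q) (X m) : P) = 0 := by
          intro m
          by_cases hm : m = i
          · rw [hm, elemHom_X_self, map_add, map_neg, hQcc, constantCoeff_X]
            ring
          · rw [elemHom_X_ne _ _ hm, constantCoeff_X]
        have hElc : ∀ j k, coeff (Finsupp.single k 1) (elemHom i (-Q) (X j) : P)
            = if j = k then 1 else 0 := by
          intro j k
          by_cases hj : j = i
          · rw [hj, elemHom_X_self, coeff_add, coeff_neg, hQlc, lc_X]
            ring
          · rw [elemHom_X_ne _ _ hj, lc_X]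
        have hψ'lc : ∀ j k, coeff (Finsupp.single k 1) (ψ' (X j)) = if j = k then 1 else 0 := by
          intro j k
          rw [hψ'app, lc_comp (elemHom i (-Q)) hccE]
          have hstep : ∀ m : Fin n, coeff (Finsupp.single m 1) (ψ (X j))
              * coeff (Finsupp.single k 1) (elemHom i (-Q) (X m) : P)
              = if j = m then coeff (Finsupp.single k 1) (elemHom i (-Q) (X m) : P) else 0 := by
            intro m
            rw [hlc j m, ite_mul, one_mul, zero_mul]
          rw [Finset.sum_congr rfl (fun m _ => hstep m), Finset.sum_ite_eq]
          simp [hElc j k]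
        have hψ'Xi : ψ' (X i) = X i := by
          rw [hψ'app, hψXi, map_add, elemHom_X_self,
            elemHom_fix i (-Q) hiQ]
          ring
        have hsub : (Finset.univ.filter fun j => ψ' (X j) ≠ X j)
            ⊆ (Finset.univ.filter fun j => ψ (X j) ≠ X j).erase i := by
          intro j hj
          rw [Finset.mem_filter] at hj
          have hji : j ≠ i := by
            rintro rfl
            exact hj.2 hψ'Xi
          refine Finset.mem_erase.mpr ⟨hji, Finset.mem_filter.mpr ⟨Finset.mem_univ j, ?_⟩⟩
          intro hfix
          apply hj.2
          rw [hψ'app, hfix, elemHom_X_ne _ _ hji]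
        have hcard' : (Finset.univ.filter fun j => ψ' (X j) ≠ X j).card ≤ m := by
          have h1 := Finset.card_le_card hsub
          have h2 := Finset.card_erase_of_mem hiB
          have h3 := Finset.card_pos.mpr ⟨i, hiB⟩
          omega
        obtain ⟨l, hl, hprod⟩ := ih ψ' hψ'gr hψ'lc hcard'
        refine ⟨e :: l, ?_, ?_⟩
        · intro f hf
          rcases List.mem_cons.mp hf with rfl | hf
          · refine ⟨hegr, i, Q, hiQ, ?_, ?_⟩
            · rw [heX i, if_pos rfl]
            · intro j hj
              rw [heX j, if_neg hj]
          · exact hl f hf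
        · rw [List.prod_cons, ← hprod]
          refine AlgEquiv.ext fun p => ?_
          rw [AlgEquiv.mul_apply, hψ', AlgEquiv.trans_apply, AlgEquiv.apply_symm_apply]

end GTAux

/-- If every variable has strictly positive degree, then every graded automorphism of
`K[x_1,…,x_n]` is graded-tame. -/
theorem graded_automorphism_positive_grading_is_graded_tame
    {K : Type*} [Field K] [IsAlgClosed K] [CharZero K] {n : ℕ}
    (w : Fin n → ℤ) (hw : ∀ i, 0 < w i)
    (φ : MvPolynomial (Fin n) K ≃ₐ[K] MvPolynomial (Fin n) K)
    (hφ : IsGraded w φ) :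
    IsGradedTame w φ := by
  classical
  open GTAux in
  have hφX : ∀ j, IsWeightedHomogeneous w (φ (X j)) (w j) :=
    fun j => hφ (w j) (X j) (isWeightedHomogeneous_X K w j)
  have hccφ : ∀ j, constantCoeff (φ (X j)) = 0 :=
    fun j => cc_of_wh (ne_of_gt (hw j)) (hφX j)
  -- the linear part of φ
  set M : Matrix (Fin n) (Fin n) K :=
    fun i j => coeff (Finsupp.single j 1) (φ (X i)) with hMdef
  have hMblock : ∀ i j, w i ≠ w j → M i j = 0 := by
    intro i j hij
    by_contra h
    have := hφX i h
    rw [weight_single] at this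
    exact hij this.symm
  -- constant coefficients of φ.symm on variables vanish
  have hccsymm : ∀ j, constantCoeff (φ.symm (X j)) = 0 := by
    intro j
    set p : MvPolynomial (Fin n) K := φ.symm (X j) with hp
    have happ : φ p = X j := φ.apply_symm_apply _
    have hq : constantCoeff (p - C (constantCoeff p)) = 0 := by simp
    have h2 : constantCoeff (φ.toAlgHom (p - C (constantCoeff p))) = 0 :=
      cc_apply φ.toAlgHom (fun m => by simpa using hccφ m) hq
    have hCc : φ (C (constantCoeff p)) = C (constantCoeff p) := by
      simpa [algebraMap_eq] using φ.commutes (constantCoeff p)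
    have h3 : constantCoeff (φ p) = constantCoeff p := by
      have h4 : φ p = C (constantCoeff p) + φ.toAlgHom (p - C (constantCoeff p)) := by
        have h6 : φ p = φ (C (constantCoeff p) + (p - C (constantCoeff p))) := by
          congr 1
          ring
        rw [h6, map_add, hCc]
        rfl
      rw [h4, map_add, h2, add_zero, constantCoeff_C]
    rw [happ, constantCoeff_X] at h3
    exact h3.symm
  set N : Matrix (Fin n) (Fin n) K :=
    fun j k => coeff (Finsupp.single k 1) (φ.symm (X j)) with hNdef
  have hMN : M * N = 1 := by
    ext i k
    have hcmp := lc_comp φ.symm.toAlgHom (fun m => by simpa using hccsymm m) (φ (X i)) k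
    have hid : φ.symm.toAlgHom (φ (X i)) = X i := by simp
    rw [hid, lc_X] at hcmp
    rw [Matrix.mul_apply, Matrix.one_apply]
    rw [hcmp]
    exact Finset.sum_congr rfl fun j _ => by simp [hMdef, hNdef]
  have hNM : N * M = 1 := mul_eq_one_comm.mp hMN
  have hNblock : ∀ i j, w i ≠ w j → N i j = 0 := inv_block M N hMN hNM hMblock
  set lam : MvPolynomial (Fin n) K ≃ₐ[K] MvPolynomial (Fin n) K := linAut M N hMN hNM with hlam
  have hlamgr : IsGraded w lam := by
    apply isGraded_of_X
    intro j
    rw [hlam, linAut_apply]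
    exact linHom_X_wh M hMblock j
  have hlamsgr : IsGraded w lam.symm := by
    apply isGraded_of_X
    intro j
    rw [hlam, linAut_symm_apply]
    exact linHom_X_wh N hNblock j
  set ψ : MvPolynomial (Fin n) K ≃ₐ[K] MvPolynomial (Fin n) K := φ.trans lam.symm with hψ
  have hψapp : ∀ p, ψ p = linHom N (φ p) := by
    intro p
    rw [hψ, AlgEquiv.trans_apply, hlam, linAut_symm_apply]
  have hψgr : IsGraded w ψ := by
    intro d f hf
    rw [hψ, AlgEquiv.trans_apply]
    exact hlamsgr d _ (hφ d f hf)
  have hψlc : ∀ i k, coeff (Finsupp.single k 1) (ψ (X i)) = if i = k then 1 else 0 := by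
    intro i k
    rw [hψapp, lc_comp (linHom N) (cc_linHom_X N)]
    have hstep : ∀ j : Fin n, coeff (Finsupp.single j 1) (φ (X i))
        * coeff (Finsupp.single k 1) (linHom N (X j) : MvPolynomial (Fin n) K)
        = M i j * N j k := by
      intro j
      rw [lc_linHom_X]
    rw [Finset.sum_congr rfl (fun j _ => hstep j), ← Matrix.mul_apply, hMN, Matrix.one_apply]
  obtain ⟨l, hl, hprod⟩ := elem_decomp hw
    (Finset.univ.filter fun i => ψ (X i) ≠ X i).card ψ hψgr hψlc le_rfl
  refine ⟨lam :: l, ?_, ?_⟩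
  · intro f hf
    rcases List.mem_cons.mp hf with rfl | hf
    · refine ⟨hlamgr, Or.inr ?_⟩
      intro i
      refine ⟨fun j => M i j, ?_⟩
      rw [hlam, linAut_apply, linHom_X]
    · exact ⟨(hl f hf).1, Or.inl (hl f hf).2⟩
  · rw [List.prod_cons, ← hprod]
    refine AlgEquiv.ext fun p => ?_
    rw [AlgEquiv.mul_apply, hψ, AlgEquiv.trans_apply, AlgEquiv.apply_symm_apply]
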